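/- Let A ∈ ℂ^{m×n}, W ∈ ℂ^{n×m}, k = max{Ind(WA), Ind(AW)}, and M_{⊕} the left core-EP inverse of M = AW. Then X = (M_{⊕})² A satisfies the three equations: (WA)^{k+1}WX = (WA)^k, XWXWA = X, and (XWAW)ᴴ = XWAW. -/

import Mathlib

open Matrix

/-- The four Penrose equations: `X` is the Moore–Penrose inverse of `A`. -/
def IsMP {p q : ℕ} (A : Matrix (Fin p) (Fin q) ℂ) (X : Matrix (Fin q) (Fin p) ℂ) : Prop :=
  A * X * A = A ∧ X * A * X = X ∧ (A * X)ᴴ = A * X ∧ (X * A)ᴴ = X * A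

/-- `k` is the index of the square matrix `A`: the least `k` with
`rank (A^(k+1)) = rank (A^k)`. -/
def IsIndex {p : ℕ} (A : Matrix (Fin p) (Fin p) ℂ) (k : ℕ) : Prop :=
  (A ^ (k + 1)).rank = (A ^ k).rank ∧ ∀ j < k, (A ^ (j + 1)).rank ≠ (A ^ j).rank

/-- `X` satisfies the Drazin equations for `A` with exponent `k`. -/
def IsDrazin {p : ℕ} (A : Matrix (Fin p) (Fin p) ℂ) (k : ℕ)
    (X : Matrix (Fin p) (Fin p) ℂ) : Prop :=
  A ^ (k + 1) * X = A ^ k ∧ X * A * X = X ∧ A * X = X * A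

/-- `X` satisfies the W-weighted Drazin equations for `A` with exponent `k`. -/
def IsWDrazin {m n : ℕ} (A : Matrix (Fin m) (Fin n) ℂ) (W : Matrix (Fin n) (Fin m) ℂ)
    (k : ℕ) (X : Matrix (Fin m) (Fin n) ℂ) : Prop :=
  (A * W) ^ (k + 1) * X * W = (A * W) ^ k ∧ X * W * A * W * X = X ∧
    A * W * X = X * W * A

/-- If the column space of `V` is contained in the column space of `U`, then `V = U * B`. -/
lemma aux_factor_col {p q r : ℕ} (U : Matrix (Fin p) (Fin q) ℂ) (V : Matrix (Fin p) (Fin r) ℂ)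
    (h : LinearMap.range V.mulVecLin ≤ LinearMap.range U.mulVecLin) :
    ∃ B : Matrix (Fin q) (Fin r) ℂ, V = U * B := by
  have hcol : ∀ j, ∃ v, U.mulVec v = V.mulVec (Pi.single j 1) := by
    intro j
    exact (h ⟨Pi.single j 1, rfl⟩ : V.mulVec (Pi.single j 1) ∈ LinearMap.range U.mulVecLin)
  choose f hf using hcol
  refine ⟨Matrix.of fun i j => f j i, ?_⟩
  ext i j
  have h1 := congrFun (hf j) i
  rw [Matrix.mulVec_single] at h1
  simp only [Pi.smul_apply, MulOpposite.op_one, one_smul, Matrix.col_apply] at h1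
  rw [← h1]
  simp [Matrix.mul_apply, Matrix.mulVec, dotProduct]

open ComplexOrder in
/-- Rank stabilization gives a left factorization `N^j = B * N^(j+1)`. -/
lemma aux_pow_factor {p : ℕ} (N : Matrix (Fin p) (Fin p) ℂ) (j : ℕ)
    (h : (N ^ (j + 1)).rank = (N ^ j).rank) :
    ∃ B : Matrix (Fin p) (Fin p) ℂ, N ^ j = B * N ^ (j + 1) := by
  have hfac : (N ^ (j + 1))ᴴ = (N ^ j)ᴴ * Nᴴ := by
    rw [← conjTranspose_mul, ← pow_succ']
  have hle : LinearMap.range ((N ^ (j + 1))ᴴ).mulVecLin ≤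
      LinearMap.range ((N ^ j)ᴴ).mulVecLin := by
    rw [hfac, Matrix.mulVecLin_mul]
    exact LinearMap.range_comp_le_range _ _
  have hr : Module.finrank ℂ (LinearMap.range ((N ^ j)ᴴ).mulVecLin) ≤
      Module.finrank ℂ (LinearMap.range ((N ^ (j + 1))ᴴ).mulVecLin) := by
    have e1 : ((N ^ j)ᴴ).rank = ((N ^ (j + 1))ᴴ).rank := by
      rw [Matrix.rank_conjTranspose, Matrix.rank_conjTranspose, h]
    exact le_of_eq e1
  have heq := Submodule.eq_of_le_of_finrank_le hle hr
  have hle2 : LinearMap.range ((N ^ j)ᴴ).mulVecLin ≤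
      LinearMap.range ((N ^ (j + 1))ᴴ).mulVecLin := heq.ge
  obtain ⟨B', hB'⟩ := aux_factor_col ((N ^ (j + 1))ᴴ) ((N ^ j)ᴴ) hle2
  refine ⟨B'ᴴ, ?_⟩
  have := congrArg conjTranspose hB'
  rwa [conjTranspose_conjTranspose, conjTranspose_mul, conjTranspose_conjTranspose] at this

/-- From the Drazin equations: `D = D^(j+1) * M^j`. -/
lemma aux_drazin_pow {p : ℕ} (M D : Matrix (Fin p) (Fin p) ℂ)
    (h2 : D * M * D = D) (h3 : M * D = D * M) (j : ℕ) :
    D = D ^ (j + 1) * M ^ j := by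
  induction j with
  | zero => simp
  | succ j ih =>
    have hDD : D = D * D * M := by
      conv_lhs => rw [← h2]
      rw [mul_assoc, h3, ← mul_assoc]
    calc D = D ^ (j + 1) * M ^ j := ih
      _ = D ^ j * (D * D * M) * M ^ j := by rw [← hDD, ← pow_succ]
      _ = D ^ (j + 1 + 1) * M ^ (j + 1) := by
          rw [pow_succ D (j + 1), pow_succ D j, pow_succ' M j]
          simp only [mul_assoc]

theorem left_weighted_core_ep_props {m n : ℕ} (A : Matrix (Fin m) (Fin n) ℂ)
    (W : Matrix (Fin n) (Fin m) ℂ) (kWA kAW k : ℕ)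
    (hkWA : IsIndex (W * A) kWA) (hkAW : IsIndex (A * W) kAW)
    (hk : k = max kWA kAW)
    (D P : Matrix (Fin m) (Fin m) ℂ)
    (hD : IsDrazin (A * W) k D) (hP : IsMP ((A * W) ^ k) P) :
    (W * A) ^ (k + 1) * W * ((P * (A * W) ^ k * D) ^ 2 * A) = (W * A) ^ k ∧
    ((P * (A * W) ^ k * D) ^ 2 * A) * W * ((P * (A * W) ^ k * D) ^ 2 * A) * W * A =
      (P * (A * W) ^ k * D) ^ 2 * A ∧
    (((P * (A * W) ^ k * D) ^ 2 * A) * W * A * W)ᴴ =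
      ((P * (A * W) ^ k * D) ^ 2 * A) * W * A * W := by
  obtain ⟨hD1, hD2, hD3⟩ := hD
  obtain ⟨hP1, hP2, hP3, hP4⟩ := hP
  set E := P * (A * W) ^ k * D with hE
  -- basic algebraic facts
  have hMD : (A * W) ^ k * (A * W * D) = (A * W) ^ k := by
    rw [← Matrix.mul_assoc, ← pow_succ, hD1]
  have h1 : E * (A * W) = P * (A * W) ^ k := by
    rw [hE]
    simp only [Matrix.mul_assoc]
    rw [← hD3, hMD]
  have hDQ : D * (P * (A * W) ^ k) = D := by
    have hp := aux_drazin_pow (A * W) D hD2 hD3 k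
    conv_lhs => rw [hp]
    calc D ^ (k + 1) * (A * W) ^ k * (P * (A * W) ^ k)
        = D ^ (k + 1) * ((A * W) ^ k * P * (A * W) ^ k) := by simp only [Matrix.mul_assoc]
      _ = D ^ (k + 1) * (A * W) ^ k := by rw [hP1]
      _ = D := hp.symm
  have hEQ : E * (P * (A * W) ^ k) = E := by
    rw [hE, Matrix.mul_assoc (P * (A * W) ^ k), hDQ]
  have hEEM : E * E * (A * W) = E := by
    rw [Matrix.mul_assoc, h1, hEQ]
  -- weighted shuffling facts
  have hNW : ∀ j : ℕ, (W * A) ^ j * W = W * (A * W) ^ j := by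
    intro j
    induction j with
    | zero => simp
    | succ j ih =>
      rw [pow_succ' (W * A) j, Matrix.mul_assoc, ih, pow_succ' (A * W) j]
      simp only [Matrix.mul_assoc]
  have hME : (A * W) ^ (k + 1) * E = (A * W) ^ k := by
    rw [hE, pow_succ' (A * W) k]
    calc A * W * (A * W) ^ k * (P * (A * W) ^ k * D)
        = A * W * ((A * W) ^ k * P * (A * W) ^ k) * D := by simp only [Matrix.mul_assoc]
      _ = A * W * (A * W) ^ k * D := by rw [hP1]
      _ = (A * W) ^ k := by rw [← pow_succ', hD1]
  have hMkE : (A * W) ^ k * E = (A * W) ^ k * D := by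
    rw [hE, ← Matrix.mul_assoc, ← Matrix.mul_assoc, hP1]
  have hcore1 : (A * W) ^ (k + 1) * (E * E) = (A * W) ^ k * D := by
    rw [← Matrix.mul_assoc, hME, hMkE]
  have hWMkA : W * ((A * W) ^ k * A) = (W * A) ^ (k + 1) := by
    rw [← Matrix.mul_assoc, ← hNW k, Matrix.mul_assoc, ← pow_succ]
  -- the rank/index argument
  obtain ⟨B, hB⟩ := aux_pow_factor (W * A) kWA hkWA.1
  have hkk : kWA ≤ k := hk ▸ le_max_left _ _
  have hsplit : (W * A) ^ k = (W * A) ^ kWA * (W * A) ^ (k - kWA) := by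
    rw [← pow_add]
    congr 1
    omega
  have hBk : (W * A) ^ k = B * (W * A) ^ (k + 1) := by
    rw [hsplit, hB, Matrix.mul_assoc, ← pow_add]
    have hkk1 : kWA + 1 + (k - kWA) = k + 1 := by omega
    rw [hkk1]
  have key1 : W * ((A * W) ^ k * (D * A)) = (W * A) ^ k := by
    have t1 : W * ((A * W) ^ k * (D * A)) = (W * A) ^ k * (W * (D * A)) := by
      rw [← Matrix.mul_assoc, ← hNW k, Matrix.mul_assoc]
    have t2 : (W * A) ^ (k + 1) * (W * (D * A)) = (W * A) ^ (k + 1) := by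
      calc (W * A) ^ (k + 1) * (W * (D * A))
          = W * ((A * W) ^ (k + 1) * D * A) := by
            rw [← Matrix.mul_assoc, hNW (k + 1)]
            simp only [Matrix.mul_assoc]
        _ = W * ((A * W) ^ k * A) := by rw [hD1]
        _ = (W * A) ^ (k + 1) := hWMkA
    rw [t1, hBk, Matrix.mul_assoc, t2]
  refine ⟨?_, ?_, ?_⟩
  · -- first equation
    have key1' : (W * A) ^ (k + 1) * W * (E * E * A) = (W * A) ^ k := by
      calc (W * A) ^ (k + 1) * W * (E * E * A)
          = W * ((A * W) ^ (k + 1) * (E * E) * A) := by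
            rw [hNW (k + 1)]
            simp only [Matrix.mul_assoc]
        _ = W * ((A * W) ^ k * D * A) := by rw [hcore1]
        _ = (W * A) ^ k := by rw [Matrix.mul_assoc ((A * W) ^ k)]; exact key1
    simpa only [pow_two, Matrix.mul_assoc] using key1'
  · -- second equation
    have key2 : E * E * (A * W) * (E * E * (A * W)) * A = E * E * A := by
      rw [hEEM]
    simpa only [pow_two, Matrix.mul_assoc] using key2
  · -- third equation
    have key3 : E * E * (A * W) * (A * W) = P * (A * W) ^ k := by
      rw [hEEM, h1]
    have key3' : E ^ 2 * A * W * A * W = P * (A * W) ^ k := by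
      rw [← key3]
      simp only [pow_two, Matrix.mul_assoc]
    rw [key3', hP4]
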